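/- arXiv:2004.14885 — 3 statements merged into one kernel-verified Lean document; each statement's English description precedes it below -/
import Mathlib

section
/- Let Z be a random vector in ℝ^n, and W = Z + Mξ where M is a random positive semidefinite matrix (possibly dependent on Z) and ξ ∼ N(0, I_n) is independent of (Z, M). Then for any convex function φ: ℝ^n → ℝ, almost surely P(φ(W) ≥ φ(Z) | Z) ≥ 1/2. -/
open MeasureTheory ProbabilityTheory Real

instance (n : ℕ) : MeasurableSpace (Matrix (Fin n) (Fin n) ℝ) :=
  (inferInstance : MeasurableSpace (Fin n → Fin n → ℝ))

/-- Negation preserves the standard Gaussian on ℝ. -/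
lemma aux_gaussian_neg : MeasurePreserving (fun x : ℝ => -x) (gaussianReal 0 1) (gaussianReal 0 1) := by
  refine ⟨measurable_neg, ?_⟩
  have h : (fun x : ℝ => -x) = ((-1 : ℝ) * ·) := by funext x; ring
  rw [h, gaussianReal_map_const_mul]
  norm_num

/-- Negation preserves the standard Gaussian on ℝ^n. -/
lemma aux_pi_gaussian_neg (n : ℕ) :
    MeasurePreserving (fun x : Fin n → ℝ => -x)
      (Measure.pi fun _ : Fin n => gaussianReal 0 1)
      (Measure.pi fun _ : Fin n => gaussianReal 0 1) := by
  have := measurePreserving_pi (fun _ : Fin n => gaussianReal 0 1)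
    (fun _ : Fin n => gaussianReal 0 1) (f := fun _ x => -x) (fun _ => aux_gaussian_neg)
  exact this

lemma aux_mulVec_measurable (n : ℕ) :
    Measurable (fun p : (Matrix (Fin n) (Fin n) ℝ) × (Fin n → ℝ) => p.1.mulVec p.2) := by
  apply measurable_pi_lambda
  intro i
  simp only [Matrix.mulVec, dotProduct]
  exact Finset.measurable_sum _ fun j _ =>
    ((measurable_pi_apply j).comp ((measurable_pi_apply i).comp measurable_fst)).mul
      ((measurable_pi_apply j).comp measurable_snd)

/-- If `W = Z + M ξ` with `M` a random PSD matrix and `ξ` a standard Gaussian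
independent of `(Z, M)`, then for convex `φ`, a.s. `P(φ(W) ≥ φ(Z) | Z) ≥ 1/2`. -/
theorem stmt_5 {Ω : Type*} [MeasurableSpace Ω] (μ : Measure Ω) [IsProbabilityMeasure μ]
    (n : ℕ) (Z ξ : Ω → (Fin n → ℝ)) (M : Ω → Matrix (Fin n) (Fin n) ℝ)
    (hZ : Measurable Z) (hξ : Measurable ξ) (hM : Measurable M)
    (hlaw : Measure.map ξ μ = Measure.pi fun _ : Fin n => gaussianReal 0 1)
    (hindep : IndepFun (fun ω => (Z ω, M ω)) ξ μ)
    (hPSD : ∀ᵐ ω ∂μ, (M ω).PosSemidef)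
    (φ : (Fin n → ℝ) → ℝ) (hφ : ConvexOn ℝ Set.univ φ) (hφm : Measurable φ)
    (W : Ω → (Fin n → ℝ)) (hW : W = fun ω => Z ω + (M ω).mulVec (ξ ω)) :
    ∀ᵐ ω ∂μ,
      (1 : ℝ) / 2 ≤
        (μ[Set.indicator {ω' | φ (Z ω') ≤ φ (W ω')} (fun _ => (1 : ℝ)) |
          MeasurableSpace.comap Z inferInstance]) ω := by
  subst hW
  have hm : MeasurableSpace.comap Z inferInstance ≤ ‹MeasurableSpace Ω› := hZ.comap_le
  -- measurability of everything in sight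
  have hmv := aux_mulVec_measurable n
  have hMξ : Measurable (fun ω => (M ω).mulVec (ξ ω)) := hmv.comp (hM.prodMk hξ)
  have hWm : Measurable (fun ω => Z ω + (M ω).mulVec (ξ ω)) := hZ.add hMξ
  have hW'm : Measurable (fun ω => Z ω - (M ω).mulVec (ξ ω)) := hZ.sub hMξ
  set A : Set Ω := {ω' | φ (Z ω') ≤ φ (Z ω' + (M ω').mulVec (ξ ω'))} with hA_def
  set A' : Set Ω := {ω' | φ (Z ω') ≤ φ (Z ω' - (M ω').mulVec (ξ ω'))} with hA'_def
  have hA : MeasurableSet A := measurableSet_le (hφm.comp hZ) (hφm.comp hWm)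
  have hA' : MeasurableSet A' := measurableSet_le (hφm.comp hZ) (hφm.comp hW'm)
  set f : Ω → ℝ := A.indicator (fun _ => (1 : ℝ)) with hf_def
  set f' : Ω → ℝ := A'.indicator (fun _ => (1 : ℝ)) with hf'_def
  have hfint : Integrable f μ := (integrable_const (1 : ℝ)).indicator hA
  have hf'int : Integrable f' μ := (integrable_const (1 : ℝ)).indicator hA'
  -- pointwise key inequality from convexity
  have key : ∀ ω, (1 : ℝ) ≤ f ω + f' ω := by
    intro ω
    by_cases h : ω ∈ A
    · have h2 : (0 : ℝ) ≤ f' ω := Set.indicator_nonneg (fun _ _ => zero_le_one) ω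
      rw [hf_def, Set.indicator_of_mem h]
      linarith
    · have hlt : φ (Z ω + (M ω).mulVec (ξ ω)) < φ (Z ω) := not_le.mp h
      have hmem : ω ∈ A' := by
        set z := Z ω
        set v := (M ω).mulVec (ξ ω)
        have heq : (1/2 : ℝ) • (z + v) + (1/2 : ℝ) • (z - v) = z := by module
        have hc := hφ.2 (Set.mem_univ (z + v)) (Set.mem_univ (z - v))
          (by norm_num : (0:ℝ) ≤ 1/2) (by norm_num : (0:ℝ) ≤ 1/2) (by norm_num)
        rw [heq] at hc
        simp only [smul_eq_mul] at hc
        have : φ z ≤ φ (z - v) := by linarith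
        exact this
      have h0 : (0 : ℝ) ≤ f ω := Set.indicator_nonneg (fun _ _ => zero_le_one) ω
      rw [hf'_def, Set.indicator_of_mem hmem]
      linarith
  -- same conditional expectation for f and f'
  have hsetint : ∀ s : Set Ω, MeasurableSet[MeasurableSpace.comap Z inferInstance] s →
      ∫ x in s, f x ∂μ = ∫ x in s, f' x ∂μ := by
    intro s hs
    obtain ⟨t, ht, rfl⟩ := hs
    -- both set integrals are measures of intersections
    have hint1 : ∫ x in Z ⁻¹' t, f x ∂μ = (μ (A ∩ Z ⁻¹' t)).toReal := by
      rw [hf_def, integral_indicator_const (1 : ℝ) hA, measureReal_def, Measure.restrict_apply hA,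
        smul_eq_mul, mul_one]
    have hint2 : ∫ x in Z ⁻¹' t, f' x ∂μ = (μ (A' ∩ Z ⁻¹' t)).toReal := by
      rw [hf'_def, integral_indicator_const (1 : ℝ) hA', measureReal_def, Measure.restrict_apply hA',
        smul_eq_mul, mul_one]
    rw [hint1, hint2]
    congr 1
    -- rewrite both as preimages under T = ((Z, M), ξ)
    set T : Ω → ((Fin n → ℝ) × Matrix (Fin n) (Fin n) ℝ) × (Fin n → ℝ) :=
      fun ω => ((Z ω, M ω), ξ ω) with hT_def
    have hTm : Measurable T := (hZ.prodMk hM).prodMk hξ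
    set B : Set (((Fin n → ℝ) × Matrix (Fin n) (Fin n) ℝ) × (Fin n → ℝ)) :=
      {p | φ p.1.1 ≤ φ (p.1.1 + p.1.2.mulVec p.2) ∧ p.1.1 ∈ t} with hB_def
    have hp11 : Measurable fun p : ((Fin n → ℝ) × Matrix (Fin n) (Fin n) ℝ) × (Fin n → ℝ) =>
        p.1.1 := measurable_fst.comp measurable_fst
    have hpmv : Measurable fun p : ((Fin n → ℝ) × Matrix (Fin n) (Fin n) ℝ) × (Fin n → ℝ) =>
        p.1.2.mulVec p.2 := hmv.comp ((measurable_snd.comp measurable_fst).prodMk measurable_snd)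
    have hBm : MeasurableSet B :=
      (measurableSet_le (hφm.comp hp11) (hφm.comp (hp11.add hpmv))).inter (hp11 ht)
    -- the negation map on the second coordinate
    set r : ((Fin n → ℝ) × Matrix (Fin n) (Fin n) ℝ) × (Fin n → ℝ) →
        ((Fin n → ℝ) × Matrix (Fin n) (Fin n) ℝ) × (Fin n → ℝ) :=
      Prod.map id (fun x => -x) with hr_def
    have hAeq : A ∩ Z ⁻¹' t = T ⁻¹' B := by
      ext ω
      exact Iff.rfl
    have hA'eq : A' ∩ Z ⁻¹' t = T ⁻¹' (r ⁻¹' B) := by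
      ext ω
      simp only [hA'_def, hB_def, hT_def, hr_def, Set.mem_inter_iff, Set.mem_preimage,
        Set.mem_setOf_eq, Prod.map_apply, id_eq, Matrix.mulVec_neg, ← sub_eq_add_neg]
    -- joint law as a product measure via independence
    have hmapT : μ.map T = (μ.map (fun ω => (Z ω, M ω))).prod (μ.map ξ) :=
      (indepFun_iff_map_prod_eq_prod_map_map (hZ.prodMk hM).aemeasurable
        hξ.aemeasurable).mp hindep
    set ν := μ.map (fun ω => (Z ω, M ω)) with hν_def
    haveI : IsProbabilityMeasure ν := Measure.isProbabilityMeasure_map (hZ.prodMk hM).aemeasurable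
    haveI : IsProbabilityMeasure (μ.map ξ) := Measure.isProbabilityMeasure_map hξ.aemeasurable
    have hrp : MeasurePreserving r (ν.prod (μ.map ξ)) (ν.prod (μ.map ξ)) := by
      rw [hr_def, hlaw]
      exact (MeasurePreserving.id ν).prod (aux_pi_gaussian_neg n)
    rw [hAeq, hA'eq, ← Measure.map_apply hTm hBm, ← Measure.map_apply hTm (hrp.measurable hBm),
      hmapT]
    exact (hrp.measure_preimage hBm.nullMeasurableSet).symm
  have heq : (μ[f|MeasurableSpace.comap Z inferInstance]) =ᵐ[μ] μ[f'|MeasurableSpace.comap Z inferInstance] := by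
    refine ae_eq_condExp_of_forall_setIntegral_eq hm hf'int
      (fun s _ _ => integrable_condExp.integrableOn)
      (fun s hs hμs => ?_)
      (StronglyMeasurable.aestronglyMeasurable stronglyMeasurable_condExp)
    rw [setIntegral_condExp hm hfint hs]
    exact hsetint s hs
  -- combine
  have hadd : μ[f + f'|MeasurableSpace.comap Z inferInstance] =ᵐ[μ] μ[f|MeasurableSpace.comap Z inferInstance] + μ[f'|MeasurableSpace.comap Z inferInstance] := condExp_add hfint hf'int _
  have hmono : (μ[(fun _ => (1 : ℝ))|MeasurableSpace.comap Z inferInstance]) ≤ᵐ[μ] μ[f + f'|MeasurableSpace.comap Z inferInstance] :=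
    condExp_mono (integrable_const 1) (hfint.add hf'int) (ae_of_all _ key)
  have hone : (μ[(fun _ => (1 : ℝ))|MeasurableSpace.comap Z inferInstance]) = fun _ => (1 : ℝ) := condExp_const hm 1
  filter_upwards [heq, hadd, hmono] with ω h1 h2 h3
  rw [hone] at h3
  simp only [Pi.add_apply] at h2
  have : (1 : ℝ) ≤ (μ[f|MeasurableSpace.comap Z inferInstance]) ω + (μ[f'|MeasurableSpace.comap Z inferInstance]) ω := by rw [← h2]; exact h3
  rw [← h1] at this
  show (1 : ℝ) / 2 ≤ (μ[f|MeasurableSpace.comap Z inferInstance]) ω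
  linarith
end

section
/- Let S ⊆ ℝ^n be a measurable set with standard Gaussian measure γ(S) = 2^{-N}. Then the Gaussian barycenter b(S) = (∫_S x dγ)/γ(S) satisfies ‖b(S)‖ ≤ √(2 log 2 · N). -/
open MeasureTheory ProbabilityTheory Real
open scoped ENNReal NNReal RealInnerProductSpace
open scoped ENNReal NNReal

lemma pdf_shift (s x : ℝ) :
    rexp (s * x) * gaussianPDFReal 0 1 x = rexp (s ^ 2 / 2) * gaussianPDFReal s 1 x := by
  simp only [gaussianPDFReal]
  simp only [gaussianPDFReal, NNReal.coe_one, mul_one]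
  rw [mul_left_comm, ← Real.exp_add, mul_left_comm (rexp (s ^ 2 / 2)), ← Real.exp_add]
  congr 2
  ring

lemma integrable_exp_gaussian (s : ℝ) :
    Integrable (fun x => rexp (s * x)) (gaussianReal 0 1) := by
  rw [gaussianReal_of_var_ne_zero 0 one_ne_zero, gaussianPDF_def]
  have hm : Measurable fun x => (gaussianPDFReal 0 1 x).toNNReal :=
    (measurable_gaussianPDFReal 0 1).real_toNNReal
  have : (fun x => ENNReal.ofReal (gaussianPDFReal 0 1 x))
      = fun x => ((gaussianPDFReal 0 1 x).toNNReal : ℝ≥0∞) := rfl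
  rw [this, integrable_withDensity_iff_integrable_coe_smul hm]
  have : (fun x => ((gaussianPDFReal 0 1 x).toNNReal : ℝ) • rexp (s * x))
      = fun x => rexp (s ^ 2 / 2) * gaussianPDFReal s 1 x := by
    funext x
    rw [smul_eq_mul, Real.coe_toNNReal _ (gaussianPDFReal_nonneg 0 1 x), mul_comm, pdf_shift]
  rw [this]
  exact (integrable_gaussianPDFReal s 1).const_mul _

lemma integral_exp_gaussian (s : ℝ) :
    ∫ x, rexp (s * x) ∂(gaussianReal 0 1) = rexp (s ^ 2 / 2) := by
  rw [gaussianReal_of_var_ne_zero 0 one_ne_zero, gaussianPDF_def]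
  have hm : Measurable fun x => (gaussianPDFReal 0 1 x).toNNReal :=
    (measurable_gaussianPDFReal 0 1).real_toNNReal
  have h1 : (fun x => ENNReal.ofReal (gaussianPDFReal 0 1 x))
      = fun x => ((gaussianPDFReal 0 1 x).toNNReal : ℝ≥0∞) := rfl
  rw [h1, integral_withDensity_eq_integral_smul hm]
  have : (fun x => ((gaussianPDFReal 0 1 x).toNNReal) • rexp (s * x))
      = fun x => rexp (s ^ 2 / 2) * gaussianPDFReal s 1 x := by
    funext x
    rw [NNReal.smul_def, smul_eq_mul, Real.coe_toNNReal _ (gaussianPDFReal_nonneg 0 1 x),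
      mul_comm, pdf_shift]
  rw [this, integral_const_mul, integral_gaussianPDFReal_eq_one s one_ne_zero, mul_one]

section PiGauss

attribute [-instance] Real.measureSpace

noncomputable local instance gaussMS : MeasureSpace ℝ :=
  { Real.measurableSpace with volume := gaussianReal 0 1 }

local instance : SigmaFinite (volume : Measure ℝ) :=
  inferInstanceAs (SigmaFinite (gaussianReal 0 1))

lemma integrable_exp_sum_pi (n : ℕ) (c : Fin n → ℝ) :
    Integrable (fun y : Fin n → ℝ => rexp (∑ i, c i * y i))
      (Measure.pi fun _ => gaussianReal 0 1) := by
  have h : (Measure.pi fun _ : Fin n => gaussianReal 0 1) = (volume : Measure (Fin n → ℝ)) := rfl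
  rw [h]
  have : (fun y : Fin n → ℝ => rexp (∑ i, c i * y i))
      = fun y => ∏ i, rexp (c i * y i) := by
    funext y; rw [Real.exp_sum]
  rw [this]
  exact Integrable.fintype_prod (f := fun i x => rexp (c i * x))
    (fun i => integrable_exp_gaussian (c i))

lemma integral_exp_sum_pi (n : ℕ) (c : Fin n → ℝ) :
    ∫ y : Fin n → ℝ, rexp (∑ i, c i * y i) ∂(Measure.pi fun _ => gaussianReal 0 1)
      = rexp (∑ i, c i ^ 2 / 2) := by
  have h : (Measure.pi fun _ : Fin n => gaussianReal 0 1) = (volume : Measure (Fin n → ℝ)) := rfl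
  rw [h]
  simp_rw [Real.exp_sum]
  rw [← h, MeasureTheory.integral_fintype_prod_eq_prod (f := fun i x => rexp (c i * x))]
  congr 1; funext i; exact integral_exp_gaussian (c i)

end PiGauss

noncomputable def stdGaussian (n : ℕ) : Measure (EuclideanSpace ℝ (Fin n)) :=
  Measure.map (MeasurableEquiv.toLp 2 (Fin n → ℝ))
    (Measure.pi fun _ : Fin n => gaussianReal 0 1)

instance isProb_stdGaussian (n : ℕ) : IsProbabilityMeasure (stdGaussian n) :=
  Measure.isProbabilityMeasure_map
    (MeasurableEquiv.toLp 2 (Fin n → ℝ)).measurable.aemeasurable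

lemma symm_apply_coord {n : ℕ} (y : Fin n → ℝ) (i : Fin n) :
    ((MeasurableEquiv.toLp 2 (Fin n → ℝ)) y : EuclideanSpace ℝ (Fin n)) i = y i := rfl

lemma inner_symm {n : ℕ} (θ : EuclideanSpace ℝ (Fin n)) (y : Fin n → ℝ) :
    ⟪θ, (MeasurableEquiv.toLp 2 (Fin n → ℝ)) y⟫ = ∑ i, θ i * y i := by
  simp [PiLp.inner_apply, RCLike.inner_apply, symm_apply_coord, mul_comm]

lemma integrable_exp_inner {n : ℕ} (θ : EuclideanSpace ℝ (Fin n)) (t : ℝ) :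
    Integrable (fun x => rexp (t * ⟪θ, x⟫)) (stdGaussian n) := by
  rw [_root_.stdGaussian, integrable_map_equiv (MeasurableEquiv.toLp 2 (Fin n → ℝ))]
  have : (fun y : Fin n → ℝ =>
      rexp (t * ⟪θ, (MeasurableEquiv.toLp 2 (Fin n → ℝ)) y⟫))
      = fun y => rexp (∑ i, (t * θ i) * y i) := by
    funext y; rw [inner_symm, Finset.mul_sum]
    exact congrArg rexp (Finset.sum_congr rfl fun i _ => by ring)
  simp only [Function.comp_def]
  rw [this]; exact integrable_exp_sum_pi n _

lemma integral_exp_inner {n : ℕ} (θ : EuclideanSpace ℝ (Fin n)) (t : ℝ) :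
    ∫ x, rexp (t * ⟪θ, x⟫) ∂(stdGaussian n) = rexp (t ^ 2 * ‖θ‖ ^ 2 / 2) := by
  rw [_root_.stdGaussian, integral_map_equiv (MeasurableEquiv.toLp 2 (Fin n → ℝ))]
  have : (fun y : Fin n → ℝ =>
      rexp (t * ⟪θ, (MeasurableEquiv.toLp 2 (Fin n → ℝ)) y⟫))
      = fun y => rexp (∑ i, (t * θ i) * y i) := by
    funext y; rw [inner_symm, Finset.mul_sum]
    exact congrArg rexp (Finset.sum_congr rfl fun i _ => by ring)
  rw [this, integral_exp_sum_pi]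
  congr 1
  have hn : ‖θ‖ ^ 2 = ∑ i, θ i ^ 2 := by
    rw [← real_inner_self_eq_norm_sq, PiLp.inner_apply]
    simp [RCLike.inner_apply, sq]
  rw [hn, Finset.mul_sum, Finset.sum_div]
  congr 1; funext i; ring

set_option maxHeartbeats 1000000 in
lemma integrable_id_stdGaussian {n : ℕ} :
    Integrable (fun x => x) (stdGaussian n) := by
  rw [_root_.stdGaussian, integrable_map_equiv (MeasurableEquiv.toLp 2 (Fin n → ℝ))]
  have hg : Integrable (fun y : Fin n → ℝ => ∑ i, (rexp (y i) + rexp (-y i)))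
      (Measure.pi fun _ => gaussianReal 0 1) := by
    apply integrable_finset_sum
    intro i _
    have h1 := integrable_exp_sum_pi n (Pi.single i (1:ℝ))
    have h2 := integrable_exp_sum_pi n (Pi.single i (-1:ℝ))
    simp only [Pi.single_apply, ite_mul, one_mul, zero_mul, neg_one_mul,
      Finset.sum_ite_eq, Finset.sum_ite_eq', Finset.mem_univ, if_true] at h1 h2
    exact h1.add h2
  refine hg.mono' ((MeasurableEquiv.toLp 2 (Fin n → ℝ)).measurable.aestronglyMeasurable) ?_
  filter_upwards with y
  have h1 : ‖((MeasurableEquiv.toLp 2 (Fin n → ℝ)) y : EuclideanSpace ℝ (Fin n))‖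
      ≤ ∑ i, |y i| := by
    rw [EuclideanSpace.norm_eq]
    have : ∑ i, ‖((MeasurableEquiv.toLp 2 (Fin n → ℝ)) y :
        EuclideanSpace ℝ (Fin n)) i‖ ^ 2 ≤ (∑ i, |y i|) ^ 2 := by
      simp only [symm_apply_coord, Real.norm_eq_abs]
      exact Finset.sum_sq_le_sq_sum_of_nonneg (fun i _ => abs_nonneg _)
    calc √(∑ i, ‖((MeasurableEquiv.toLp 2 (Fin n → ℝ)) y :
          EuclideanSpace ℝ (Fin n)) i‖ ^ 2) ≤ √((∑ i, |y i|) ^ 2) := Real.sqrt_le_sqrt this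
      _ = ∑ i, |y i| := Real.sqrt_sq (Finset.sum_nonneg fun i _ => abs_nonneg _)
  refine h1.trans (Finset.sum_le_sum fun i _ => ?_)
  rcases abs_cases (y i) with ⟨h, _⟩ | ⟨h, _⟩
  · rw [h]
    have := Real.add_one_le_exp (y i)
    nlinarith [Real.exp_pos (-(y i))]
  · rw [h]
    have := Real.add_one_le_exp (-(y i))
    nlinarith [Real.exp_pos (y i)]

/-- If `γ(S) = 2^{-N}`, the Gaussian barycenter of `S` has norm at most
`√(2 log 2 · N)`. -/
theorem stmt_12 (n N : ℕ) (S : Set (EuclideanSpace ℝ (Fin n))) (hS : MeasurableSet S)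
    (hmeas : stdGaussian n S = (2 : ENNReal)⁻¹ ^ N) :
    ‖((stdGaussian n S).toReal)⁻¹ • ∫ x in S, x ∂(stdGaussian n)‖
      ≤ Real.sqrt (2 * Real.log 2 * N) := by
  have hpS : (stdGaussian n S).toReal = ((2:ℝ))⁻¹ ^ N := by
    rw [hmeas, ENNReal.toReal_pow, ENNReal.toReal_inv]
    norm_num
  set p : ℝ := ((2:ℝ))⁻¹ ^ N with hp
  have hp0 : 0 < p := by positivity
  set m := ∫ x in S, x ∂(stdGaussian n) with hmdef
  rw [hpS]
  by_cases hm0 : m = 0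
  · rw [hm0, smul_zero, norm_zero]
    exact Real.sqrt_nonneg _
  set L : ℝ := Real.log 2 * N with hLdef
  have hL0 : 0 ≤ L := by positivity
  have hpL : p = rexp (-L) := by
    have h2 : rexp (L) = 2 ^ N := by
      rw [hLdef, mul_comm, Real.exp_nat_mul, Real.exp_log two_pos]
    rw [hp, Real.exp_neg, h2, inv_pow]
  set θ : EuclideanSpace ℝ (Fin n) := ‖m‖⁻¹ • m with hθdef
  have hθ : ‖θ‖ = 1 := norm_smul_inv_norm hm0
  have hIntId := integrable_id_stdGaussian (n := n)
  have hIntS : Integrable (fun x => x) ((stdGaussian n).restrict S) := hIntId.restrict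
  have hI : ∫ x in S, ⟪θ, x⟫ ∂(stdGaussian n) = ‖m‖ := by
    rw [integral_inner hIntS θ, ← hmdef, hθdef, real_inner_smul_left,
      real_inner_self_eq_norm_mul_norm]
    field_simp
  set b := p⁻¹ • m with hbdef
  have hbnorm : ‖b‖ = p⁻¹ * ‖m‖ := by
    rw [hbdef, norm_smul, Real.norm_eq_abs, abs_of_pos (by positivity)]
  set t : ℝ := ‖b‖ with htdef
  have hm0' : 0 < ‖m‖ := norm_pos_iff.mpr hm0
  have ht0 : 0 < t := by rw [hbnorm]; positivity
  -- integrability facts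
  have hu : Integrable (fun x => ⟪θ, x⟫) (stdGaussian n) := hIntId.const_inner θ
  have huS : Integrable (fun x => t * ⟪θ, x⟫ - t ^ 2 / 2) ((stdGaussian n).restrict S) :=
    ((hu.const_mul t).sub (integrable_const _)).restrict
  have hexp_eq : (fun x : EuclideanSpace ℝ (Fin n) => rexp (t * ⟪θ, x⟫ - t ^ 2 / 2))
      = fun x => rexp (t * ⟪θ, x⟫) * rexp (-(t ^ 2 / 2)) := by
    funext x; rw [← Real.exp_add]; ring_nf
  have hG1 : Integrable
      (fun x => p * rexp (t * ⟪θ, x⟫ - t ^ 2 / 2)) (stdGaussian n) := by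
    have h := (((integrable_exp_inner θ t)).mul_const (rexp (-(t ^ 2 / 2)))).const_mul p
    exact h.congr (by filter_upwards with x using by rw [congrFun hexp_eq x])
  have hG2 : Integrable (S.indicator fun _ => L - 1) (stdGaussian n) :=
    (integrable_const _).indicator hS
  have hF : Integrable (S.indicator fun x => t * ⟪θ, x⟫ - t ^ 2 / 2) (stdGaussian n) :=
    ((hu.const_mul t).sub (integrable_const _)).indicator hS
  -- pointwise inequality
  have hFG : ∀ x, S.indicator (fun x => t * ⟪θ, x⟫ - t ^ 2 / 2) x
      ≤ p * rexp (t * ⟪θ, x⟫ - t ^ 2 / 2) + S.indicator (fun _ => L - 1) x := by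
    intro x
    by_cases hx : x ∈ S
    · rw [Set.indicator_of_mem hx, Set.indicator_of_mem hx]
      set a := t * ⟪θ, x⟫ - t ^ 2 / 2
      have h1 : p * rexp a = rexp (a - L) := by
        rw [hpL, ← Real.exp_add]; ring_nf
      have h2 := Real.add_one_le_exp (a - L)
      rw [h1]; linarith
    · rw [Set.indicator_of_notMem hx, Set.indicator_of_notMem hx]
      positivity
  have hmono := integral_mono hF (hG1.add hG2) hFG
  simp only [Pi.add_apply] at hmono
  -- compute both sides
  have hlhs : ∫ x, S.indicator (fun x => t * ⟪θ, x⟫ - t ^ 2 / 2) x ∂(stdGaussian n)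
      = t * ‖m‖ - t ^ 2 / 2 * p := by
    rw [integral_indicator hS, integral_sub ((hu.const_mul t).restrict) (integrable_const _),
      integral_const_mul, hI, setIntegral_const, measureReal_def, hpS, smul_eq_mul]
    ring
  have hrhs : ∫ x, (p * rexp (t * ⟪θ, x⟫ - t ^ 2 / 2)
        + S.indicator (fun _ => L - 1) x) ∂(stdGaussian n) = L * p := by
    rw [integral_add hG1 hG2, integral_indicator hS, setIntegral_const, measureReal_def, hpS, smul_eq_mul]
    have : ∫ x, p * rexp (t * ⟪θ, x⟫ - t ^ 2 / 2) ∂(stdGaussian n) = p := by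
      rw [integral_const_mul]
      rw [show ∫ x, rexp (t * ⟪θ, x⟫ - t ^ 2 / 2) ∂(stdGaussian n)
          = ∫ x, rexp (t * ⟪θ, x⟫) * rexp (-(t ^ 2 / 2)) ∂(stdGaussian n) from by rw [hexp_eq]]
      rw [integral_mul_const, integral_exp_inner θ t, hθ]
      rw [← Real.exp_add]
      norm_num
    rw [this]; ring
  rw [hlhs, hrhs] at hmono
  -- conclude
  have hsq : t ^ 2 ≤ 2 * L := by
    have h3 : t * ‖m‖ ≤ (t ^ 2 / 2 + L) * p := by linarith
    have h4 : t ^ 2 = p⁻¹ * (t * ‖m‖) := by rw [hbnorm]; ring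
    have h5 : p⁻¹ * (t * ‖m‖) ≤ p⁻¹ * ((t ^ 2 / 2 + L) * p) :=
      mul_le_mul_of_nonneg_left h3 (by positivity)
    have h6 : p⁻¹ * ((t ^ 2 / 2 + L) * p) = t ^ 2 / 2 + L := by field_simp
    nlinarith
  have h2L : 2 * Real.log 2 * (N : ℝ) = 2 * L := by rw [hLdef]; ring
  rw [h2L]
  exact (Real.le_sqrt ht0.le (by positivity)).mpr hsq
end

section
/- Let f(x) = max_{i≤m}(⟨v_i, x⟩ + h·t_i) where v_i ∈ ℝ^n, t_i ∈ ℝ, h ≥ 0. Suppose there are constants M, δ, C > 0 such that for all h ∈ (0,1), E[max_i(⟨v_i, g⟩ + h t_i)] ≤ M + δ + Ch² with g standard Gaussian. Then for any ε ∈ (0,1) and the subset I_ε = {i : t_i ≥ ε}, one has E[max_{i ∈ I_ε}⟨v_i, g⟩] ≤ M + δ − ε²/(4C) provided ε/(2C) < 1, where the maximum over an empty set is interpreted as −∞. -/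
open MeasureTheory ProbabilityTheory Real Finset
open scoped Classical

lemma integrable_id_gaussianReal : Integrable (fun x : ℝ => x) (gaussianReal 0 1) := by
  rw [gaussianReal_of_var_ne_zero 0 one_ne_zero]
  rw [integrable_withDensity_iff (measurable_gaussianPDF 0 1)
    (ae_of_all _ fun x => ENNReal.ofReal_lt_top)]
  have hpdf : ∀ x : ℝ, (gaussianPDF 0 1 x).toReal = gaussianPDFReal 0 1 x := fun x =>
    ENNReal.toReal_ofReal (gaussianPDFReal_nonneg 0 1 x)
  have hre : ∀ x : ℝ, gaussianPDFReal 0 1 x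
      = (Real.sqrt (2 * π))⁻¹ * Real.exp (-(1/2) * x ^ 2) := by
    intro x
    rw [gaussianPDFReal_def]
    simp only [sub_zero, NNReal.coe_one, mul_one]
    congr 1
    ring
  have hbound : Integrable
      (fun x : ℝ => (Real.sqrt (2 * π))⁻¹ * Real.exp (-(1/4) * x ^ 2)) := by
    exact (integrable_exp_neg_mul_sq (by norm_num)).const_mul _
  apply hbound.mono'
  · apply AEStronglyMeasurable.mul aestronglyMeasurable_id
    exact ((measurable_gaussianPDF 0 1).ennreal_toReal).aestronglyMeasurable
  · refine ae_of_all _ fun x => ?_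
    rw [hpdf, hre]
    have hc : (0:ℝ) < (Real.sqrt (2 * π))⁻¹ := by
      rw [inv_pos]
      exact Real.sqrt_pos.2 (by positivity)
    have habs : |x| ≤ Real.exp ((1/4) * x ^ 2) := by
      have h1 : (1/4 : ℝ) * x ^ 2 + 1 ≤ Real.exp ((1/4) * x ^ 2) :=
        Real.add_one_le_exp _
      nlinarith [abs_nonneg x, sq_abs x, sq_nonneg (|x| - 2)]
    have hexp : |x| * Real.exp (-(1/2) * x ^ 2) ≤ Real.exp (-(1/4) * x ^ 2) := by
      calc |x| * Real.exp (-(1/2) * x ^ 2)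
          ≤ Real.exp ((1/4) * x ^ 2) * Real.exp (-(1/2) * x ^ 2) := by
            exact mul_le_mul_of_nonneg_right habs (Real.exp_nonneg _)
        _ = Real.exp (-(1/4) * x ^ 2) := by
            rw [← Real.exp_add]; ring_nf
    rw [norm_mul, Real.norm_eq_abs, Real.norm_eq_abs,
      abs_of_nonneg (by positivity : (0:ℝ) ≤ (Real.sqrt (2 * π))⁻¹ * Real.exp (-(1/2) * x ^ 2))]
    calc |x| * ((Real.sqrt (2 * π))⁻¹ * Real.exp (-(1/2) * x ^ 2))
        = (Real.sqrt (2 * π))⁻¹ * (|x| * Real.exp (-(1/2) * x ^ 2)) := by ring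
      _ ≤ (Real.sqrt (2 * π))⁻¹ * Real.exp (-(1/4) * x ^ 2) :=
          mul_le_mul_of_nonneg_left hexp (le_of_lt hc)

lemma map_eval_pi {n : ℕ} (j : Fin n) :
    Measure.map (Function.eval j) (Measure.pi fun _ : Fin n => gaussianReal 0 1)
      = gaussianReal 0 1 := by
  ext s hs
  rw [Measure.map_apply (measurable_pi_apply j) hs, Set.eval_preimage, Measure.pi_pi]
  rw [Fintype.prod_eq_single j (fun i hi => by simp [Function.update_of_ne hi])]
  simp

lemma integrable_eval_pi {n : ℕ} (j : Fin n) :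
    Integrable (fun y : Fin n → ℝ => y j)
      (Measure.pi fun _ : Fin n => gaussianReal 0 1) := by
  have h := integrable_id_gaussianReal
  rw [← map_eval_pi j] at h
  exact (integrable_map_measure h.1 (measurable_pi_apply j).aemeasurable).mp h

lemma integrable_inner_stdGaussian {n : ℕ} (v : EuclideanSpace ℝ (Fin n)) :
    Integrable (fun x => (inner ℝ v x : ℝ)) (stdGaussian n) := by
  unfold _root_.stdGaussian
  rw [integrable_map_equiv]
  have heq : ((fun x => (inner ℝ v x : ℝ)) ∘ (MeasurableEquiv.toLp 2 (Fin n → ℝ)))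
      = fun y : Fin n → ℝ => ∑ j, v j * y j := by
    funext y
    simp [MeasurableEquiv.coe_toLp, PiLp.inner_apply, RCLike.inner_apply,
      PiLp.toLp_apply, mul_comm]
  rw [heq]
  exact integrable_finset_sum _ fun j _ => (integrable_eval_pi j).const_mul _

lemma integrable_sup' {ι : Type*} {α : Type*} [MeasurableSpace α] {μ : Measure α}
    {s : Finset ι} (hs : s.Nonempty) {f : ι → α → ℝ}
    (hf : ∀ i ∈ s, Integrable (f i) μ) :
    Integrable (fun x => s.sup' hs (fun i => f i x)) μ := by
  induction s using Finset.cons_induction with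
  | empty => exact absurd hs (by simp)
  | cons a s ha ih =>
    rcases s.eq_empty_or_nonempty with rfl | hs'
    · simpa using hf a (by simp)
    · simp only [Finset.sup'_cons hs']
      exact (hf a (by simp)).sup (ih hs' fun i hi => hf i (Finset.mem_cons_of_mem hi))

instance isProbabilityMeasure_stdGaussian (n : ℕ) :
    IsProbabilityMeasure (stdGaussian n) := by
  unfold _root_.stdGaussian
  exact Measure.isProbabilityMeasure_map
    (MeasurableEquiv.toLp 2 (Fin n → ℝ)).measurable.aemeasurable

/-- Quadratic decay of the expected maximum restricted to indices with large tilt,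
deduced from a quadratic bound on the tilted expected maximum. -/
theorem stmt_15 (n m : ℕ) (hm : Finset.univ.Nonempty (α := Fin m))
    (v : Fin m → EuclideanSpace ℝ (Fin n)) (t : Fin m → ℝ)
    (M δ C : ℝ) (hM : 0 < M) (hδ : 0 < δ) (hC : 0 < C)
    (hbound : ∀ h : ℝ, 0 < h → h < 1 →
      ∫ x, Finset.univ.sup' hm (fun i => (inner ℝ (v i) x : ℝ) + h * t i) ∂(stdGaussian n)
        ≤ M + δ + C * h ^ 2)
    (ε : ℝ) (hε : ε ∈ Set.Ioo (0 : ℝ) 1) (hεC : ε / (2 * C) < 1)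
    (hne : (Finset.univ.filter (fun i : Fin m => ε ≤ t i)).Nonempty) :
    ∫ x, (Finset.univ.filter (fun i : Fin m => ε ≤ t i)).sup'
        hne (fun i => (inner ℝ (v i) x : ℝ)) ∂(stdGaussian n)
      ≤ M + δ - ε ^ 2 / (4 * C) := by
  obtain ⟨hε0, hε1⟩ := hε
  set h : ℝ := ε / (2 * C) with hh
  have hh0 : 0 < h := by positivity
  have hint1 : Integrable
      (fun x => (Finset.univ.filter (fun i : Fin m => ε ≤ t i)).sup'
        hne (fun i => (inner ℝ (v i) x : ℝ))) (stdGaussian n) :=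
    integrable_sup' hne fun i _ => integrable_inner_stdGaussian (v i)
  have hint2 : Integrable
      (fun x => Finset.univ.sup' hm (fun i => (inner ℝ (v i) x : ℝ) + h * t i))
      (stdGaussian n) :=
    integrable_sup' hm fun i _ =>
      (integrable_inner_stdGaussian (v i)).add (integrable_const _)
  have hpoint : ∀ x : EuclideanSpace ℝ (Fin n),
      (Finset.univ.filter (fun i : Fin m => ε ≤ t i)).sup'
        hne (fun i => (inner ℝ (v i) x : ℝ))
      ≤ Finset.univ.sup' hm (fun i => (inner ℝ (v i) x : ℝ) + h * t i) - ε * h := by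
    intro x
    apply Finset.sup'_le
    intro i hi
    rw [Finset.mem_filter] at hi
    have hti : ε ≤ t i := hi.2
    have h1 : (inner ℝ (v i) x : ℝ) + h * t i
        ≤ Finset.univ.sup' hm (fun i => (inner ℝ (v i) x : ℝ) + h * t i) :=
      Finset.le_sup' (fun i => (inner ℝ (v i) x : ℝ) + h * t i) (Finset.mem_univ i)
    nlinarith [mul_le_mul_of_nonneg_left hti (le_of_lt hh0)]
  have hmono : ∫ x, (Finset.univ.filter (fun i : Fin m => ε ≤ t i)).sup'
        hne (fun i => (inner ℝ (v i) x : ℝ)) ∂(stdGaussian n)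
      ≤ ∫ x, (Finset.univ.sup' hm (fun i => (inner ℝ (v i) x : ℝ) + h * t i) - ε * h)
        ∂(stdGaussian n) :=
    integral_mono hint1 (hint2.sub (integrable_const _)) hpoint
  have hsplit : ∫ x, (Finset.univ.sup' hm (fun i => (inner ℝ (v i) x : ℝ) + h * t i) - ε * h)
        ∂(stdGaussian n)
      = (∫ x, Finset.univ.sup' hm (fun i => (inner ℝ (v i) x : ℝ) + h * t i)
        ∂(stdGaussian n)) - ε * h := by
    rw [integral_sub hint2 (integrable_const _), integral_const]
    simp
  have hb := hbound h hh0 hεC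
  have hfinal : M + δ + C * h ^ 2 - ε * h = M + δ - ε ^ 2 / (4 * C) := by
    rw [hh]
    field_simp
    ring
  calc ∫ x, (Finset.univ.filter (fun i : Fin m => ε ≤ t i)).sup'
        hne (fun i => (inner ℝ (v i) x : ℝ)) ∂(stdGaussian n)
      ≤ (∫ x, Finset.univ.sup' hm (fun i => (inner ℝ (v i) x : ℝ) + h * t i)
        ∂(stdGaussian n)) - ε * h := by rw [← hsplit]; exact hmono
    _ ≤ M + δ + C * h ^ 2 - ε * h := by linarith
    _ = M + δ - ε ^ 2 / (4 * C) := hfinal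
end
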